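/- For every nonnegative integer t with binary expansion t = Σ_{i=0}^{l−1} t_i 2^i, the number num_{S0}(t+1) of nonzero states equals 4 raised to the power Σ_{j=0}^{l−1} t_j (4 to the binary digit sum of t). -/

import Mathlib

theorem num_S0_digit_sum (num : ℕ → ℕ)
    (h0 : num 0 = 0) (h1 : num 1 = 1)
    (hodd : ∀ t : ℕ, num (2 * t + 1) = num (t + 1))
    (heven : ∀ t : ℕ, num (2 * t + 2) = 4 * num (t + 1)) :
    ∀ t l : ℕ, t < 2 ^ l →
      num (t + 1) = 4 ^ (∑ j ∈ Finset.range l, t / 2 ^ j % 2) := by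
  intro t l
  induction l generalizing t with
  | zero =>
    intro ht
    interval_cases t
    simpa using h1
  | succ l ih =>
    intro ht
    rw [Finset.sum_range_succ']
    simp only [pow_zero, Nat.div_one]
    have key : ∀ j, t / 2 ^ (j + 1) % 2 = (t / 2) / 2 ^ j % 2 := by
      intro j
      rw [Nat.div_div_eq_div_mul, ← pow_succ']
    simp only [key]
    have hq : t / 2 < 2 ^ l := by
      rw [Nat.div_lt_iff_lt_mul (by norm_num)]
      calc t < 2 ^ (l + 1) := ht
        _ = 2 ^ l * 2 := by rw [pow_succ]
    have := ih (t / 2) hq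
    rcases Nat.even_or_odd t with ⟨q, hq2⟩ | ⟨q, hq2⟩
    · subst hq2
      have hqq : (q + q) / 2 = q := by omega
      rw [hqq] at this ⊢
      rcases Nat.eq_zero_or_pos q with rfl | hqpos
      · simpa using this
      · have : num (q + q + 1) = num (q + 1) := by
          have := hodd q; rw [show 2 * q = q + q by ring] at this; exact this
        rw [this, ih q (by omega)]
        have : (q + q) % 2 = 0 := by omega
        rw [this]
        ring
    · subst hq2
      have hqq : (2 * q + 1) / 2 = q := by omega
      rw [hqq] at this ⊢
      have h2 : num (2 * q + 1 + 1) = 4 * num (q + 1) := heven q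
      rw [h2, ih q (by omega)]
      have : (2 * q + 1) % 2 = 1 := by omega
      rw [this]
      ring
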